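/- arXiv:1505.02179 — 4 statements merged into one kernel-verified Lean document; each statement's English description precedes it below -/
import Mathlib

section
/- For 0 < q < 1 and |t| < 1, the q-exponential series e_q(t) = ∑_{n≥0} t^n/(q;q)_n converges and equals 1/(t;q)_∞, where (t;q)_∞ = ∏_{k≥0}(1 - t q^k). -/
/-- The q-Pochhammer symbol `(a;q)_n = ∏_{k=0}^{n-1} (1 - a q^k)`. -/
noncomputable def qPoch (q a : ℝ) (n : ℕ) : ℝ := ∏ k ∈ Finset.range n, (1 - a * q ^ k)

/-- `(a;q)_∞ = ∏_{k=0}^{∞} (1 - a q^k)`. -/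
noncomputable def qPochInf (q a : ℝ) : ℝ := ∏' k : ℕ, (1 - a * q ^ k)

variable {q a x t : ℝ}

lemma factor_pos (hq0 : 0 < q) (hq1 : q < 1) (ha : |a| < 1) (k : ℕ) :
    0 < 1 - a * q ^ k := by
  have h1 : q ^ k ≤ 1 := pow_le_one₀ hq0.le hq1.le
  have h2 : a * q ^ k ≤ |a| * q ^ k := by
    have := le_abs_self a
    nlinarith [pow_pos hq0 k]
  nlinarith [abs_nonneg a, pow_pos hq0 k]

lemma log_summable (hq0 : 0 < q) (hq1 : q < 1) (ha : |a| < 1) :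
    Summable fun k : ℕ => Real.log (1 - a * q ^ k) := by
  have hgeo : Summable fun k : ℕ => |a| / (1 - |a|) * q ^ k :=
    (summable_geometric_of_lt_one hq0.le hq1).mul_left _
  refine Summable.of_norm_bounded hgeo ?_
  intro k
  have hqk : q ^ k ≤ 1 := pow_le_one₀ hq0.le hq1.le
  have hqk0 : 0 < q ^ k := pow_pos hq0 k
  have hx : |a * q ^ k| < 1 := by
    rw [abs_mul, abs_pow, abs_of_pos hq0]
    nlinarith [abs_nonneg a]
  have h := Real.abs_log_sub_add_sum_range_le hx 0
  simp only [Finset.range_zero, Finset.sum_empty, zero_add, pow_one] at h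
  rw [Real.norm_eq_abs]
  refine h.trans ?_
  rw [abs_mul, abs_pow, abs_of_pos hq0]
  rw [div_le_iff₀ (by nlinarith [abs_nonneg a] : (0:ℝ) < 1 - |a| * q ^ k)]
  rw [div_mul_eq_mul_div, div_mul_eq_mul_div, le_div_iff₀ (by linarith : (0:ℝ) < 1 - |a|)]
  have h1 : 1 - |a| ≤ 1 - |a| * q ^ k := by nlinarith [abs_nonneg a]
  nlinarith [mul_le_mul_of_nonneg_left h1 (mul_nonneg (abs_nonneg a) hqk0.le)]

lemma qPoch_multipliable (hq0 : 0 < q) (hq1 : q < 1) (ha : |a| < 1) :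
    Multipliable fun k : ℕ => 1 - a * q ^ k :=
  Real.multipliable_of_summable_log
    (fun k => factor_pos hq0 hq1 ha k) (log_summable hq0 hq1 ha)

lemma qPoch_tendsto (hq0 : 0 < q) (hq1 : q < 1) (ha : |a| < 1) :
    Filter.Tendsto (fun n => qPoch q a n) Filter.atTop (nhds (qPochInf q a)) :=
  (qPoch_multipliable hq0 hq1 ha).hasProd.tendsto_prod_nat

lemma qPochInf_pos (hq0 : 0 < q) (hq1 : q < 1) (ha : |a| < 1) :
    0 < qPochInf q a := by
  have h := Real.rexp_tsum_eq_tprod (f := fun k => 1 - a * q ^ k)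
    (fun k => factor_pos hq0 hq1 ha k) (log_summable hq0 hq1 ha)
  have h2 := h
  rw [qPochInf, ← h2]
  exact Real.exp_pos _

lemma qPoch_pos (hq0 : 0 < q) (hq1 : q < 1) (ha : |a| < 1) (n : ℕ) :
    0 < qPoch q a n :=
  Finset.prod_pos fun k _ => factor_pos hq0 hq1 ha k

lemma qPochInf_le_qPoch (hq0 : 0 < q) (hq1 : q < 1) (n : ℕ) :
    qPochInf q q ≤ qPoch q q n := by
  have hq : |q| < 1 := by rw [abs_of_pos hq0]; exact hq1
  refine le_of_tendsto (qPoch_tendsto hq0 hq1 hq) ?_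
  filter_upwards [Filter.eventually_ge_atTop n] with m hm
  unfold qPoch
  rw [← Finset.prod_range_mul_prod_Ico _ hm]
  have h1 : ∏ k ∈ Finset.Ico n m, (1 - q * q ^ k) ≤ 1 := by
    refine Finset.prod_le_one (fun k _ => (factor_pos hq0 hq1 hq k).le) ?_
    intro k _
    nlinarith [pow_pos hq0 k]
  have h2 : (0:ℝ) ≤ ∏ k ∈ Finset.range n, (1 - q * q ^ k) :=
    Finset.prod_nonneg fun k _ => (factor_pos hq0 hq1 hq k).le
  have h3 : (0:ℝ) ≤ ∏ k ∈ Finset.Ico n m, (1 - q * q ^ k) :=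
    Finset.prod_nonneg fun k _ => (factor_pos hq0 hq1 hq k).le
  exact mul_le_of_le_one_right h2 h1

lemma qExp_summable (hq0 : 0 < q) (hq1 : q < 1) (hx : |x| < 1) :
    Summable fun n : ℕ => x ^ n / qPoch q q n := by
  have hq : |q| < 1 := by rw [abs_of_pos hq0]; exact hq1
  have hL : 0 < qPochInf q q := qPochInf_pos hq0 hq1 hq
  refine Summable.of_norm_bounded (g := fun n => |x| ^ n / qPochInf q q)
    ((summable_geometric_of_lt_one (abs_nonneg x) hx).div_const _) ?_
  intro n
  rw [Real.norm_eq_abs, abs_div, abs_pow, abs_of_pos (qPoch_pos hq0 hq1 hq n)]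
  exact div_le_div_of_nonneg_left (pow_nonneg (abs_nonneg x) n) hL
    (qPochInf_le_qPoch hq0 hq1 n) |>.trans_eq rfl

lemma qExp_funEq (hq0 : 0 < q) (hq1 : q < 1) (hx : |x| < 1) :
    HasSum (fun n : ℕ => (q * x) ^ n / qPoch q q n)
      ((1 - x) * ∑' n : ℕ, x ^ n / qPoch q q n) := by
  have hq : |q| < 1 := by rw [abs_of_pos hq0]; exact hq1
  set S := ∑' n : ℕ, x ^ n / qPoch q q n with hSdef
  have hF : HasSum (fun n : ℕ => x ^ n / qPoch q q n) S :=
    (qExp_summable hq0 hq1 hx).hasSum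
  set d : ℕ → ℝ := fun n => if n = 0 then 0 else x ^ n / qPoch q q (n - 1) with hd
  have hshift : HasSum (fun n : ℕ => d (n + 1)) (x * S) := by
    have h := hF.mul_left x
    have he : (fun n : ℕ => d (n + 1)) = fun n : ℕ => x * (x ^ n / qPoch q q n) := by
      funext n
      simp only [hd, Nat.succ_ne_zero, if_false, Nat.add_sub_cancel, pow_succ]
      ring
    rw [he]
    exact h
  have hdsum : HasSum d (x * S) := by
    have := (hasSum_nat_add_iff (f := d) 1).mp hshift
    simpa [hd] using this
  have hkey : ∀ n : ℕ, (q * x) ^ n / qPoch q q n = x ^ n / qPoch q q n - d n := by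
    intro n
    cases n with
    | zero => simp [hd, qPoch]
    | succ m =>
      have hPm : qPoch q q m ≠ 0 := (qPoch_pos hq0 hq1 hq m).ne'
      have hPm1 : qPoch q q (m + 1) ≠ 0 := (qPoch_pos hq0 hq1 hq (m + 1)).ne'
      have hrec : qPoch q q (m + 1) = qPoch q q m * (1 - q * q ^ m) := by
        rw [qPoch, qPoch, Finset.prod_range_succ]
      simp only [hd, Nat.succ_ne_zero, if_false, Nat.add_sub_cancel]
      rw [hrec]
      have hf : (1 : ℝ) - q * q ^ m ≠ 0 := (factor_pos hq0 hq1 hq m).ne'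
      field_simp
      ring
  have h := hF.sub hdsum
  have he : (fun n : ℕ => (q * x) ^ n / qPoch q q n)
      = fun n : ℕ => x ^ n / qPoch q q n - d n := funext hkey
  rw [he, show (1 - x) * S = S - x * S by ring]
  exact h

lemma qExp_iter (hq0 : 0 < q) (hq1 : q < 1) (ht : |t| < 1) (N : ℕ) :
    (∑' n : ℕ, (q ^ N * t) ^ n / qPoch q q n)
      = qPoch q t N * ∑' n : ℕ, t ^ n / qPoch q q n := by
  induction N with
  | zero => simp [qPoch]
  | succ N ih =>
    have hxt : |q ^ N * t| < 1 := by
      rw [abs_mul, abs_pow, abs_of_pos hq0]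
      calc q ^ N * |t| ≤ 1 * |t| := by
            exact mul_le_mul_of_nonneg_right (pow_le_one₀ hq0.le hq1.le) (abs_nonneg t)
        _ < 1 := by simpa using ht
    have h := qExp_funEq hq0 hq1 hxt
    have he : (fun n : ℕ => (q * (q ^ N * t)) ^ n / qPoch q q n)
        = fun n : ℕ => (q ^ (N + 1) * t) ^ n / qPoch q q n := by
      funext n; rw [show q * (q ^ N * t) = q ^ (N + 1) * t by ring]
    rw [he] at h
    rw [h.tsum_eq, ih]
    rw [show qPoch q t (N + 1) = qPoch q t N * (1 - t * q ^ N) by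
      rw [qPoch, qPoch, Finset.prod_range_succ]]
    ring

lemma qExp_near_one (hq0 : 0 < q) (hq1 : q < 1) (ht : |t| < 1) (hx : |x| ≤ |t|) :
    |(∑' n : ℕ, x ^ n / qPoch q q n) - 1|
      ≤ |x| / qPochInf q q * (1 - |t|)⁻¹ := by
  have hq : |q| < 1 := by rw [abs_of_pos hq0]; exact hq1
  have hL : 0 < qPochInf q q := qPochInf_pos hq0 hq1 hq
  have hx1 : |x| < 1 := lt_of_le_of_lt hx ht
  have hF : HasSum (fun n : ℕ => x ^ n / qPoch q q n)
      (∑' n : ℕ, x ^ n / qPoch q q n) := (qExp_summable hq0 hq1 hx1).hasSum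
  have h1 : HasSum (fun n : ℕ => x ^ (n + 1) / qPoch q q (n + 1))
      ((∑' n : ℕ, x ^ n / qPoch q q n) - 1) := by
    refine (hasSum_nat_add_iff (f := fun n : ℕ => x ^ n / qPoch q q n) 1).mpr ?_
    simpa [qPoch] using hF
  have hbnd : ∀ n : ℕ, ‖x ^ (n + 1) / qPoch q q (n + 1)‖
      ≤ |x| / qPochInf q q * |t| ^ n := by
    intro n
    rw [Real.norm_eq_abs, abs_div, abs_pow, abs_of_pos (qPoch_pos hq0 hq1 hq (n + 1))]
    have h2 : |x| ^ (n + 1) / qPoch q q (n + 1) ≤ |x| ^ (n + 1) / qPochInf q q :=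
      div_le_div_of_nonneg_left (pow_nonneg (abs_nonneg x) _) hL
        (qPochInf_le_qPoch hq0 hq1 (n + 1))
    refine h2.trans ?_
    have h3 : |x| ^ n ≤ |t| ^ n := pow_le_pow_left₀ (abs_nonneg x) hx n
    have h4 : |x| ^ (n + 1) / qPochInf q q = |x| / qPochInf q q * |x| ^ n := by
      rw [pow_succ']; ring
    rw [h4]
    exact mul_le_mul_of_nonneg_left h3 (div_nonneg (abs_nonneg x) hL.le)
  rw [← h1.tsum_eq]
  have hg : HasSum (fun n : ℕ => |x| / qPochInf q q * |t| ^ n)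
      (|x| / qPochInf q q * (1 - |t|)⁻¹) :=
    (hasSum_geometric_of_lt_one (abs_nonneg t) ht).mul_left _
  simpa using tsum_of_norm_bounded hg hbnd

/-- For `0 < q < 1` and `|t| < 1`, the series `e_q(t) = ∑_{n≥0} t^n/(q;q)_n`
converges and equals `1/(t;q)_∞`. -/
theorem qExp_eq_one_div_qPochInf (q t : ℝ) (hq0 : 0 < q) (hq1 : q < 1) (ht : |t| < 1) :
    HasSum (fun n : ℕ => t ^ n / qPoch q q n) (1 / qPochInf q t) := by
  set S := ∑' n : ℕ, t ^ n / qPoch q q n with hSdef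
  have hS : HasSum (fun n : ℕ => t ^ n / qPoch q q n) S :=
    (qExp_summable hq0 hq1 ht).hasSum
  have h2 : Filter.Tendsto (fun N : ℕ => qPoch q t N * S) Filter.atTop
      (nhds (qPochInf q t * S)) :=
    (qPoch_tendsto hq0 hq1 ht).mul_const S
  have heq : (fun N : ℕ => qPoch q t N * S)
      = fun N : ℕ => ∑' n : ℕ, (q ^ N * t) ^ n / qPoch q q n := by
    funext N; exact (qExp_iter hq0 hq1 ht N).symm
  rw [heq] at h2
  have habs : ∀ N : ℕ, |q ^ N * t| ≤ |t| := by
    intro N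
    rw [abs_mul, abs_pow, abs_of_pos hq0]
    exact mul_le_of_le_one_left (abs_nonneg t) (pow_le_one₀ hq0.le hq1.le)
  have hbound : ∀ N : ℕ, |(∑' n : ℕ, (q ^ N * t) ^ n / qPoch q q n) - 1|
      ≤ q ^ N * (|t| / qPochInf q q * (1 - |t|)⁻¹) := by
    intro N
    refine (qExp_near_one hq0 hq1 ht (habs N)).trans ?_
    rw [abs_mul, abs_pow, abs_of_pos hq0]
    ring_nf
    exact le_rfl
  have h0 : Filter.Tendsto (fun N : ℕ => q ^ N * (|t| / qPochInf q q * (1 - |t|)⁻¹))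
      Filter.atTop (nhds 0) := by
    simpa using (tendsto_pow_atTop_nhds_zero_of_lt_one hq0.le hq1).mul_const _
  have h3 : Filter.Tendsto (fun N : ℕ => ∑' n : ℕ, (q ^ N * t) ^ n / qPoch q q n)
      Filter.atTop (nhds 1) := by
    rw [tendsto_iff_norm_sub_tendsto_zero]
    refine squeeze_zero (fun N => norm_nonneg _) ?_ h0
    intro N
    simpa [Real.norm_eq_abs] using hbound N
  have hprod : qPochInf q t * S = 1 := tendsto_nhds_unique h2 h3
  have hP : qPochInf q t ≠ 0 := by
    intro h; rw [h, zero_mul] at hprod; exact one_ne_zero hprod.symm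
  have : (1 : ℝ) / qPochInf q t = S := by
    field_simp
    linarith [hprod]
  rw [this]
  exact hS
end

section
/- For 0 < q < 1 and all t ∈ ℂ, the q-exponential series E_q(t) = ∑_{n≥0} (-1)^n q^{n(n-1)/2} t^n/(q;q)_n converges and equals the infinite product (t;q)_∞ = ∏_{k≥0}(1 - t q^k). -/
open Finset Filter Topology

/-- The complex q-Pochhammer symbol `(a;q)_n = ∏_{k=0}^{n-1} (1 - a q^k)`. -/
noncomputable def qPochC (q a : ℂ) (n : ℕ) : ℂ := ∏ k ∈ Finset.range n, (1 - a * q ^ k)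

/-- `(a;q)_∞ = ∏_{k=0}^{∞} (1 - a q^k)` over `ℂ`. -/
noncomputable def qPochInfC (q a : ℂ) : ℂ := ∏' k : ℕ, (1 - a * q ^ k)

noncomputable def qTerm (q : ℝ) (t : ℂ) (n : ℕ) : ℂ :=
  (-1) ^ n * (q : ℂ) ^ (n * (n - 1) / 2) * t ^ n / qPochC q q n

lemma tri_succ (n : ℕ) : (n + 1) * ((n + 1) - 1) / 2 = n * (n - 1) / 2 + n := by
  rw [← Finset.sum_range_id, ← Finset.sum_range_id, Finset.sum_range_succ]

section

variable {q : ℝ} (hq0 : 0 < q) (hq1 : q < 1)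

lemma factor_lb (hq0 : 0 < q) (hq1 : q < 1) (k : ℕ) : 1 - q ≤ 1 - q * q ^ k := by
  have h1 : q ^ k ≤ 1 := pow_le_one₀ hq0.le hq1.le
  nlinarith

lemma pochR_lb (hq0 : 0 < q) (hq1 : q < 1) (n : ℕ) :
    (1 - q) ^ n ≤ ∏ k ∈ Finset.range n, (1 - q * q ^ k) := by
  calc (1 - q) ^ n = ∏ _k ∈ Finset.range n, (1 - q) := by
        rw [Finset.prod_const, Finset.card_range]
    _ ≤ _ := Finset.prod_le_prod (fun i _ => by linarith) (fun i _ => factor_lb hq0 hq1 i)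

lemma pochR_pos (hq0 : 0 < q) (hq1 : q < 1) (n : ℕ) :
    0 < ∏ k ∈ Finset.range n, (1 - q * q ^ k) :=
  lt_of_lt_of_le (pow_pos (by linarith) n) (pochR_lb hq0 hq1 n)

lemma qPochC_eq (n : ℕ) :
    qPochC q q n = ((∏ k ∈ Finset.range n, (1 - q * q ^ k) : ℝ) : ℂ) := by
  rw [qPochC]; push_cast; rfl

lemma qPochC_ne (hq0 : 0 < q) (hq1 : q < 1) (n : ℕ) : qPochC (q : ℂ) q n ≠ 0 := by
  rw [qPochC_eq]
  exact_mod_cast (pochR_pos hq0 hq1 n).ne'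

lemma one_sub_pow_ne (hq0 : 0 < q) (hq1 : q < 1) (n : ℕ) : (1 : ℂ) - (q : ℂ) ^ (n + 1) ≠ 0 := by
  have : (1 : ℂ) - (q : ℂ) ^ (n + 1) = ((1 - q ^ (n + 1) : ℝ) : ℂ) := by push_cast; ring
  rw [this]
  have h1 : q ^ (n + 1) < 1 := pow_lt_one₀ hq0.le hq1 (Nat.succ_ne_zero n)
  exact_mod_cast (by linarith : (1 : ℝ) - q ^ (n+1) ≠ 0)

lemma qTerm_succ (hq0 : 0 < q) (hq1 : q < 1) (t : ℂ) (n : ℕ) :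
    qTerm q t (n + 1) * (1 - (q : ℂ) ^ (n + 1)) = -((q : ℂ) ^ n * t) * qTerm q t n := by
  have hp : qPochC (q : ℂ) q (n + 1) = qPochC q q n * (1 - (q : ℂ) ^ (n + 1)) := by
    rw [qPochC, qPochC, Finset.prod_range_succ, ← pow_succ']
  have he : ((q : ℂ)) ^ ((n + 1) * ((n + 1) - 1) / 2) =
      (q : ℂ) ^ (n * (n - 1) / 2) * (q : ℂ) ^ n := by
    rw [tri_succ, pow_add]
  rw [qTerm, qTerm, hp, he]
  have h1 := qPochC_ne hq0 hq1 n
  have h2 := one_sub_pow_ne hq0 hq1 n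
  field_simp
  ring

lemma norm_one_sub_pow (hq0 : 0 < q) (hq1 : q < 1) (n : ℕ) :
    1 - q ≤ ‖(1 : ℂ) - (q : ℂ) ^ (n + 1)‖ := by
  have : (1 : ℂ) - (q : ℂ) ^ (n + 1) = ((1 - q ^ (n + 1) : ℝ) : ℂ) := by push_cast; ring
  rw [this, Complex.norm_real, Real.norm_eq_abs]
  have h1 : q ^ (n + 1) ≤ q := by
    calc q ^ (n + 1) ≤ q ^ 1 := pow_le_pow_of_le_one hq0.le hq1.le (by omega)
    _ = q := pow_one q
  have h2 : q ^ (n + 1) < 1 := pow_lt_one₀ hq0.le hq1 (Nat.succ_ne_zero n)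
  rw [abs_of_pos (by linarith)]
  linarith

lemma summable_qTerm (hq0 : 0 < q) (hq1 : q < 1) (t : ℂ) : Summable (qTerm q t) := by
  apply summable_of_ratio_norm_eventually_le (r := 1/2) (by norm_num)
  have hten : Tendsto (fun n : ℕ => q ^ n * ‖t‖ / (1 - q)) atTop (𝓝 0) := by
    have h := ((tendsto_pow_atTop_nhds_zero_of_lt_one hq0.le hq1).mul_const ‖t‖).div_const (1 - q)
    simpa using h
  filter_upwards [hten.eventually_le_const (by norm_num : (0:ℝ) < 1/2)] with n hn
  -- `‖qTerm (n+1)‖ * ‖1 - q^(n+1)‖ = q^n ‖t‖ ‖qTerm n‖`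
  have hrec := congrArg norm (qTerm_succ hq0 hq1 t n)
  rw [norm_mul, norm_mul, norm_neg, norm_mul] at hrec
  have hnq : ‖(q:ℂ)^n‖ = q ^ n := by
    rw [← Complex.ofReal_pow, Complex.norm_real, Real.norm_eq_abs, abs_of_pos (by positivity)]
  rw [hnq] at hrec
  have hposq : (0:ℝ) < 1 - q := by linarith
  have hb := norm_one_sub_pow hq0 hq1 n
  have h1 : ‖qTerm q t (n+1)‖ * (1 - q) ≤ q ^ n * ‖t‖ * ‖qTerm q t n‖ := by
    calc ‖qTerm q t (n+1)‖ * (1 - q) ≤ ‖qTerm q t (n+1)‖ * ‖1 - (q:ℂ)^(n+1)‖ :=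
          mul_le_mul_of_nonneg_left hb (norm_nonneg _)
      _ = q ^ n * ‖t‖ * ‖qTerm q t n‖ := by rw [hrec]
  have h2 : ‖qTerm q t (n+1)‖ ≤ (q ^ n * ‖t‖ / (1 - q)) * ‖qTerm q t n‖ := by
    rw [div_mul_eq_mul_div, le_div_iff₀ hposq]
    linarith
  calc ‖qTerm q t (n+1)‖ ≤ (q ^ n * ‖t‖ / (1 - q)) * ‖qTerm q t n‖ := h2
    _ ≤ 1/2 * ‖qTerm q t n‖ := mul_le_mul_of_nonneg_right hn (norm_nonneg _)


noncomputable def qExpSum (q : ℝ) (t : ℂ) : ℂ := ∑' n, qTerm q t n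

lemma hasSum_qExpSum (hq0 : 0 < q) (hq1 : q < 1) (t : ℂ) :
    HasSum (qTerm q t) (qExpSum q t) := (summable_qTerm hq0 hq1 t).hasSum

lemma qTerm_qmul (t : ℂ) (n : ℕ) : qTerm q (q * t) n = (q : ℂ) ^ n * qTerm q t n := by
  rw [qTerm, qTerm, mul_pow]
  ring

lemma qExpSum_funcEq (hq0 : 0 < q) (hq1 : q < 1) (t : ℂ) :
    qExpSum q t = (1 - t) * qExpSum q ((q : ℂ) * t) := by
  have h1 : HasSum (qTerm q ((q : ℂ) * t)) (qExpSum q ((q : ℂ) * t)) :=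
    hasSum_qExpSum hq0 hq1 _
  have h2 := h1.mul_left t
  set s : ℕ → ℂ := fun n => match n with
    | 0 => 0
    | m + 1 => t * qTerm q ((q : ℂ) * t) m with hs_def
  have hshift : HasSum (fun n => s (n + 1)) (t * qExpSum q ((q : ℂ) * t)) := h2
  have hs : HasSum s (t * qExpSum q ((q : ℂ) * t)) := by
    have h := (hasSum_nat_add_iff (f := s) 1).mp hshift
    simpa [hs_def] using h
  have h3 := h1.sub hs
  have key : ∀ n, qTerm q ((q : ℂ) * t) n - s n = qTerm q t n := by
    intro n
    match n with
    | 0 => simp [hs_def, qTerm, qPochC]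
    | m + 1 =>
      have hrec := qTerm_succ hq0 hq1 t m
      have hne := one_sub_pow_ne hq0 hq1 m
      show qTerm q ((q : ℂ) * t) (m + 1) - t * qTerm q ((q : ℂ) * t) m = qTerm q t (m + 1)
      rw [qTerm_qmul, qTerm_qmul]
      -- q^(m+1) * g(m+1) - t * q^m * g m = g(m+1)
      -- from hrec : g(m+1) * (1 - q^(m+1)) = -(q^m * t) * g m
      have : t * ((q : ℂ) ^ m * qTerm q t m) = -(qTerm q t (m+1) * (1 - (q : ℂ) ^ (m+1))) := by
        rw [hrec]; ring
      rw [this]; ring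
  have h4 : HasSum (qTerm q t) (qExpSum q ((q : ℂ) * t) - t * qExpSum q ((q : ℂ) * t)) :=
    h3.congr_fun (fun n => (key n).symm)
  have := (hasSum_qExpSum hq0 hq1 t).unique h4
  rw [this]; ring

lemma qExpSum_iterate (hq0 : 0 < q) (hq1 : q < 1) (t : ℂ) (N : ℕ) :
    qExpSum q t = qPochC q t N * qExpSum q ((q : ℂ) ^ N * t) := by
  induction N with
  | zero => simp [qPochC]
  | succ n ih =>
    rw [ih, qExpSum_funcEq hq0 hq1 ((q : ℂ) ^ n * t)]
    have hp : qPochC (q : ℂ) t (n + 1) = qPochC q t n * (1 - t * (q : ℂ) ^ n) := by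
      rw [qPochC, qPochC, Finset.prod_range_succ]
    rw [hp]
    have : (q : ℂ) ^ (n + 1) * t = (q : ℂ) * ((q : ℂ) ^ n * t) := by ring
    rw [this]
    ring

lemma qTerm_zero (s : ℂ) : qTerm q s 0 = 1 := by
  simp [qTerm, qPochC]

lemma norm_qTerm (hq0 : 0 < q) (hq1 : q < 1) (s : ℂ) (n : ℕ) :
    ‖qTerm q s n‖ = q ^ (n * (n - 1) / 2) * ‖s‖ ^ n / (∏ k ∈ Finset.range n, (1 - q * q ^ k)) := by
  have hP := pochR_pos hq0 hq1 n
  rw [qTerm, qPochC_eq, norm_div, norm_mul, norm_mul, norm_pow, norm_pow, norm_pow,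
    norm_neg, norm_one, one_pow, one_mul, Complex.norm_real, Complex.norm_real,
    Real.norm_eq_abs, Real.norm_eq_abs, abs_of_pos hq0, abs_of_pos hP]

lemma summable_u (hq0 : 0 < q) (hq1 : q < 1) (M : ℝ) (hM : 1 ≤ M) :
    Summable (fun n : ℕ => q ^ ((n + 1) * ((n + 1) - 1) / 2) * M ^ n / (1 - q) ^ (n + 1)) := by
  set u : ℕ → ℝ := fun n => q ^ ((n + 1) * ((n + 1) - 1) / 2) * M ^ n / (1 - q) ^ (n + 1) with hu
  have hposq : (0 : ℝ) < 1 - q := by linarith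
  have hM0 : (0 : ℝ) < M := by linarith
  have hun : ∀ n, 0 < u n := fun n => by rw [hu]; positivity
  have hrec : ∀ n, u (n + 1) = u n * (q ^ (n + 1) * M / (1 - q)) := by
    intro n
    rw [hu]
    simp only
    rw [tri_succ (n + 1), pow_add]
    field_simp
    ring
  apply summable_of_ratio_norm_eventually_le (r := 1/2) (by norm_num)
  have hten : Tendsto (fun n : ℕ => q ^ (n + 1) * M / (1 - q)) atTop (𝓝 0) := by
    have h := (((tendsto_pow_atTop_nhds_zero_of_lt_one hq0.le
      hq1).comp (tendsto_add_atTop_nat 1)).mul_const M).div_const (1 - q)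
    simpa [Function.comp] using h
  filter_upwards [hten.eventually_le_const (by norm_num : (0 : ℝ) < 1/2)] with n hn
  rw [Real.norm_eq_abs, Real.norm_eq_abs, abs_of_pos (hun _), abs_of_pos (hun _), hrec]
  calc u n * (q ^ (n + 1) * M / (1 - q)) ≤ u n * (1/2) :=
        mul_le_mul_of_nonneg_left hn (hun n).le
    _ = 1/2 * u n := by ring

lemma qExpSum_near_one (hq0 : 0 < q) (hq1 : q < 1) (M : ℝ) (hM : 1 ≤ M) :
    ∃ C : ℝ, 0 ≤ C ∧ ∀ s : ℂ, ‖s‖ ≤ M → ‖qExpSum q s - 1‖ ≤ C * ‖s‖ := by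
  set u : ℕ → ℝ := fun n => q ^ ((n + 1) * ((n + 1) - 1) / 2) * M ^ n / (1 - q) ^ (n + 1) with hu
  have hsu := summable_u hq0 hq1 M hM
  have hposq : (0 : ℝ) < 1 - q := by linarith
  have hM0 : (0 : ℝ) < M := by linarith
  refine ⟨∑' n, u n, tsum_nonneg (fun n => by rw [hu]; positivity), fun s hs => ?_⟩
  have htail : HasSum (fun n => qTerm q s (n + 1)) (qExpSum q s - 1) := by
    apply (hasSum_nat_add_iff (f := qTerm q s) 1).mpr
    simpa [Finset.sum_range_one, qTerm_zero] using hasSum_qExpSum hq0 hq1 s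
  have hbound : ∀ n, ‖qTerm q s (n + 1)‖ ≤ u n * ‖s‖ := by
    intro n
    rw [norm_qTerm hq0 hq1 s (n + 1), hu]
    have hP := pochR_pos hq0 hq1 (n + 1)
    have hPl := pochR_lb hq0 hq1 (n + 1)
    have h1 : ‖s‖ ^ (n + 1) ≤ M ^ n * ‖s‖ := by
      rw [pow_succ]
      exact mul_le_mul_of_nonneg_right
        (pow_le_pow_left₀ (norm_nonneg s) hs n) (norm_nonneg s)
    calc q ^ ((n+1) * ((n+1) - 1) / 2) * ‖s‖ ^ (n+1) / (∏ k ∈ Finset.range (n+1), (1 - q * q ^ k))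
        ≤ q ^ ((n+1) * ((n+1) - 1) / 2) * (M ^ n * ‖s‖) / (1 - q) ^ (n + 1) := by
          apply div_le_div₀ (by positivity)
            (mul_le_mul_of_nonneg_left h1 (by positivity)) (by positivity) hPl
      _ = q ^ ((n+1) * ((n+1) - 1) / 2) * M ^ n / (1 - q) ^ (n + 1) * ‖s‖ := by ring
  have hsummn : Summable (fun n => ‖qTerm q s (n + 1)‖) :=
    Summable.of_nonneg_of_le (fun n => norm_nonneg _) hbound (hsu.mul_right ‖s‖)
  calc ‖qExpSum q s - 1‖ = ‖∑' n, qTerm q s (n + 1)‖ := by rw [htail.tsum_eq]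
    _ ≤ ∑' n, ‖qTerm q s (n + 1)‖ := norm_tsum_le_tsum_norm hsummn
    _ ≤ ∑' n, u n * ‖s‖ := Summable.tsum_le_tsum hbound hsummn (hsu.mul_right ‖s‖)
    _ = (∑' n, u n) * ‖s‖ := by rw [tsum_mul_right]

lemma tendsto_qExpSum_one (hq0 : 0 < q) (hq1 : q < 1) (t : ℂ) :
    Tendsto (fun N : ℕ => qExpSum q ((q : ℂ) ^ N * t)) atTop (𝓝 1) := by
  set M : ℝ := max ‖t‖ 1 with hM
  obtain ⟨C, hC0, hC⟩ := qExpSum_near_one hq0 hq1 M (le_max_right _ _)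
  rw [tendsto_iff_norm_sub_tendsto_zero]
  have hnorm : ∀ N : ℕ, ‖((q : ℂ) ^ N * t)‖ = q ^ N * ‖t‖ := by
    intro N
    rw [norm_mul, norm_pow, Complex.norm_real, Real.norm_eq_abs, abs_of_pos hq0]
  apply squeeze_zero (fun N => norm_nonneg _) (g := fun N => C * (q ^ N * ‖t‖))
  · intro N
    have hle : ‖((q : ℂ) ^ N * t)‖ ≤ M := by
      rw [hnorm]
      calc q ^ N * ‖t‖ ≤ 1 * ‖t‖ := by
            exact mul_le_mul_of_nonneg_right (pow_le_one₀ hq0.le hq1.le) (norm_nonneg t)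
        _ = ‖t‖ := one_mul _
        _ ≤ M := le_max_left _ _
    have := hC _ hle
    rwa [hnorm] at this
  · have h := ((tendsto_pow_atTop_nhds_zero_of_lt_one hq0.le hq1).mul_const ‖t‖).const_mul C
    simpa using h

lemma hasProd_zero_of_factor_zero {f : ℕ → ℂ} {k : ℕ} (hk : f k = 0) : HasProd f 0 := by
  rw [HasProd]
  apply Tendsto.congr' _ tendsto_const_nhds
  filter_upwards [Filter.eventually_ge_atTop ({k} : Finset ℕ)] with s hs
  exact (Finset.prod_eq_zero (hs (Finset.mem_singleton_self k)) hk).symm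

lemma hasProd_qPochInf (hq0 : 0 < q) (hq1 : q < 1) (t : ℂ)
    (h : ∀ k : ℕ, (1 : ℂ) - t * (q : ℂ) ^ k ≠ 0) :
    HasProd (fun k : ℕ => (1 : ℂ) - t * (q : ℂ) ^ k) (qPochInfC q t) := by
  have hm : Multipliable (fun k : ℕ => (1 : ℂ) - t * (q : ℂ) ^ k) := by
    apply Complex.multipliable_of_summable_log
    have hten : Tendsto (fun n : ℕ => ‖t * (q : ℂ) ^ n‖) atTop (𝓝 0) := by
      have hn : ∀ n : ℕ, ‖t * (q : ℂ) ^ n‖ = ‖t‖ * q ^ n := by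
        intro n
        rw [norm_mul, norm_pow, Complex.norm_real, Real.norm_eq_abs, abs_of_pos hq0]
      have h := (tendsto_pow_atTop_nhds_zero_of_lt_one hq0.le hq1).const_mul ‖t‖
      simpa [hn, abs_of_pos hq0] using h
    apply Summable.of_norm_bounded_eventually_nat (g := fun n => 3/2 * (‖t‖ * q ^ n))
    · exact ((summable_geometric_of_lt_one hq0.le hq1).mul_left ‖t‖).mul_left (3/2)
    · filter_upwards [hten.eventually_le_const (by norm_num : (0 : ℝ) < 1/2)] with n hn
      have hlog := Complex.norm_log_one_add_half_le_self (z := -(t * (q : ℂ) ^ n))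
        (by rwa [norm_neg])
      have h1 : (1 : ℂ) + -(t * (q : ℂ) ^ n) = 1 - t * (q : ℂ) ^ n := by ring
      rw [h1, norm_neg] at hlog
      calc ‖Complex.log (1 - t * (q : ℂ) ^ n)‖ ≤ 3/2 * ‖t * (q : ℂ) ^ n‖ := hlog
        _ = 3/2 * (‖t‖ * q ^ n) := by
            rw [norm_mul, norm_pow, Complex.norm_real, Real.norm_eq_abs, abs_of_pos hq0]
  exact hm.hasProd

end

/-- For `0 < q < 1` and every `t ∈ ℂ`, the series
`E_q(t) = ∑_{n≥0} (-1)^n q^{n(n-1)/2} t^n/(q;q)_n` converges and equals `(t;q)_∞`. -/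
theorem qExpE_eq_qPochInf (q : ℝ) (hq0 : 0 < q) (hq1 : q < 1) (t : ℂ) :
    HasSum (fun n : ℕ => (-1) ^ n * (q : ℂ) ^ (n * (n - 1) / 2) * t ^ n / qPochC q q n)
      (qPochInfC q t) := by
  have hF : HasSum (qTerm q t) (qExpSum q t) := hasSum_qExpSum hq0 hq1 t
  suffices h : qExpSum q t = qPochInfC q t by
    rw [← h]; exact hF
  have hProd : HasProd (fun k : ℕ => (1 : ℂ) - t * (q : ℂ) ^ k) (qPochInfC q t) := by
    by_cases hz : ∀ k : ℕ, (1 : ℂ) - t * (q : ℂ) ^ k ≠ 0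
    · exact hasProd_qPochInf hq0 hq1 t hz
    · push_neg at hz
      obtain ⟨k, hk⟩ := hz
      have h0 : HasProd (fun k : ℕ => (1 : ℂ) - t * (q : ℂ) ^ k) 0 :=
        hasProd_zero_of_factor_zero hk
      have : qPochInfC q t = 0 := h0.tprod_eq
      rw [this]
      exact h0
  have htp : Tendsto (fun N : ℕ => qPochC q t N) atTop (𝓝 (qPochInfC q t)) :=
    hProd.tendsto_prod_nat
  have hlim : Tendsto (fun N : ℕ => qPochC q t N * qExpSum q ((q : ℂ) ^ N * t)) atTop
      (𝓝 (qPochInfC q t * 1)) := htp.mul (tendsto_qExpSum_one hq0 hq1 t)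
  have hconst : (fun N : ℕ => qPochC q t N * qExpSum q ((q : ℂ) ^ N * t)) =
      fun _ => qExpSum q t := funext fun N => (qExpSum_iterate hq0 hq1 t N).symm
  rw [hconst] at hlim
  have := tendsto_nhds_unique hlim tendsto_const_nhds
  rw [← this, mul_one]
end

section
/- Let 0 < q < 1, a ∈ ℝ, and u, v > 0 with |a u| < v. Define sin_q(t) = (e_q(it) - e_q(-it))/(2i). Then N_q(sin_q(a x))(u;v) = a u/(v² + a² u²). -/
open Complex

/-- The complex q-exponential `e_q(t) = ∑_{n≥0} t^n/(q;q)_n`. -/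
noncomputable def qExpC (q t : ℂ) : ℂ := ∑' n : ℕ, t ^ n / qPochC q q n

/-- `sin_q(t) = (e_q(it) - e_q(-it))/(2i)`. -/
noncomputable def qSin (q t : ℂ) : ℂ := (qExpC q (I * t) - qExpC q (-(I * t))) / (2 * I)

/-- The first-type q-Natural transform of a complex-valued function. -/
noncomputable def qNaturalC (q : ℝ) (f : ℝ → ℂ) (u v : ℝ) : ℂ :=
  (∏' k : ℕ, (1 - (q : ℂ) * (q : ℂ) ^ k)) / (v : ℂ) *
    ∑' k : ℕ, (q : ℂ) ^ k * f (u / v * q ^ k) / qPochC q q k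

namespace QNatAux

open Filter Topology

lemma qPochC_succ (q a : ℂ) (n : ℕ) :
    qPochC q a (n + 1) = qPochC q a n * (1 - a * q ^ n) := Finset.prod_range_succ _ _

@[simp] lemma qPochC_zero (q a : ℂ) : qPochC q a 0 = 1 := Finset.prod_range_zero _

variable {q : ℂ}

lemma one_sub_ne (hq : ‖q‖ < 1) (n : ℕ) : (1 : ℂ) - q * q ^ n ≠ 0 := by
  intro h
  have h1 : q * q ^ n = 1 := by linear_combination -h
  have h2 : ‖q * q ^ n‖ < 1 := by
    rw [norm_mul, norm_pow]
    have h3 : ‖q‖ ^ n ≤ 1 := pow_le_one₀ (norm_nonneg q) hq.le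
    nlinarith [norm_nonneg q]
  rw [h1] at h2
  simp at h2

lemma poch_ne_zero (hq : ‖q‖ < 1) (n : ℕ) : qPochC q q n ≠ 0 :=
  Finset.prod_ne_zero_iff.mpr fun k _ => one_sub_ne hq k

lemma summable_exp (hq : ‖q‖ < 1) {z : ℂ} (hz : ‖z‖ < 1) :
    Summable fun k : ℕ => z ^ k / qPochC q q k := by
  rcases eq_or_ne z 0 with rfl | hz0
  · apply summable_of_ne_finset_zero (s := {0})
    intro k hk
    have hk0 : k ≠ 0 := by simpa using hk
    simp [zero_pow hk0]
  · apply summable_of_ratio_test_tendsto_lt_one hz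
      (Eventually.of_forall fun n =>
        div_ne_zero (pow_ne_zero _ hz0) (poch_ne_zero hq n))
    have h1 : ∀ n : ℕ, ‖z ^ (n + 1) / qPochC q q (n + 1)‖ / ‖z ^ n / qPochC q q n‖
        = ‖z‖ / ‖1 - q * q ^ n‖ := by
      intro n
      have hfac : z ^ (n + 1) / qPochC q q (n + 1)
          = (z / (1 - q * q ^ n)) * (z ^ n / qPochC q q n) := by
        rw [qPochC_succ, pow_succ]
        have h3 : qPochC q q n ≠ 0 := poch_ne_zero hq n
        have h4 : (1:ℂ) - q * q ^ n ≠ 0 := one_sub_ne hq n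
        field_simp
      have hB : ‖z ^ n / qPochC q q n‖ ≠ 0 :=
        norm_ne_zero_iff.mpr (div_ne_zero (pow_ne_zero n hz0) (poch_ne_zero hq n))
      rw [hfac, norm_mul, mul_div_assoc, div_self hB, mul_one, norm_div]
    simp only [h1]
    have h4 : Tendsto (fun n : ℕ => ‖(1 : ℂ) - q * q ^ n‖) atTop (𝓝 1) := by
      have h5 : Tendsto (fun n : ℕ => (1 : ℂ) - q * q ^ n) atTop (𝓝 1) := by
        have := (tendsto_pow_atTop_nhds_zero_of_norm_lt_one hq).const_mul q
        simpa using tendsto_const_nhds.sub this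
      simpa using h5.norm
    have := (tendsto_const_nhds (x := ‖z‖) (f := atTop (α := ℕ))).div h4 one_ne_zero
    simpa [Pi.div_def] using this

lemma funcEq (hq : ‖q‖ < 1) {z : ℂ} (hz : ‖z‖ < 1) :
    qExpC q z * (1 - z) = qExpC q (q * z) := by
  have hqz : ‖q * z‖ < 1 := by
    rw [norm_mul]
    nlinarith [norm_nonneg q, norm_nonneg z]
  have Sz := summable_exp hq hz
  have Sqz := summable_exp hq hqz
  have hsub : qExpC q z - qExpC q (q * z)
      = ∑' k : ℕ, (z ^ k / qPochC q q k - (q * z) ^ k / qPochC q q k) :=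
    (Summable.tsum_sub Sz Sqz).symm
  have hzero : ∑' k : ℕ, (z ^ k / qPochC q q k - (q * z) ^ k / qPochC q q k)
      = ∑' k : ℕ, (z ^ (k + 1) / qPochC q q (k + 1) - (q * z) ^ (k + 1) / qPochC q q (k + 1)) := by
    rw [Summable.tsum_eq_zero_add (Sz.sub Sqz)]
    simp
  have hterm : ∀ k : ℕ, z ^ (k + 1) / qPochC q q (k + 1) - (q * z) ^ (k + 1) / qPochC q q (k + 1)
      = z * (z ^ k / qPochC q q k) := by
    intro k
    rw [qPochC_succ]
    have h1 : (1 : ℂ) - q * q ^ k ≠ 0 := one_sub_ne hq k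
    have h2 : qPochC q q k ≠ 0 := poch_ne_zero hq k
    field_simp
    ring
  have : qExpC q z - qExpC q (q * z) = z * qExpC q z := by
    rw [hsub, hzero]
    simp only [hterm]
    rw [tsum_mul_left]
    rfl
  linear_combination this

lemma iterate (hq : ‖q‖ < 1) (n : ℕ) :
    qExpC q q * qPochC q q n = qExpC q (q ^ (n + 1)) := by
  induction n with
  | zero => simp [pow_one]
  | succ n ih =>
    have hz : ‖q ^ (n + 1)‖ < 1 := by
      rw [norm_pow]
      exact pow_lt_one₀ (norm_nonneg _) hq (Nat.succ_ne_zero n)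
    have hfe := funcEq hq hz
    rw [qPochC_succ, ← mul_assoc, ih]
    have hpow : q * q ^ n = q ^ (n + 1) := (pow_succ' q n).symm
    rw [hpow, hfe]
    congr 1
    rw [← pow_succ']

lemma norm_poch_ge (hq : ‖q‖ < 1) (n : ℕ) :
    (1 - ‖q‖) ^ n ≤ ‖qPochC q q n‖ := by
  rw [qPochC, norm_prod]
  have : (1 - ‖q‖) ^ n = ∏ _k ∈ Finset.range n, (1 - ‖q‖) := by
    rw [Finset.prod_const, Finset.card_range]
  rw [this]
  apply Finset.prod_le_prod
  · intro i _; linarith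
  · intro i _
    have h1 : ‖q * q ^ i‖ ≤ ‖q‖ := by
      rw [norm_mul, norm_pow]
      have : ‖q‖ ^ i ≤ 1 := pow_le_one₀ (norm_nonneg q) hq.le
      nlinarith [norm_nonneg q]
    calc 1 - ‖q‖ ≤ 1 - ‖q * q ^ i‖ := by linarith
    _ = ‖(1 : ℂ)‖ - ‖q * q ^ i‖ := by simp
    _ ≤ ‖1 - q * q ^ i‖ := norm_sub_norm_le _ _

lemma estimate (hq : ‖q‖ < 1) {w : ℂ} (hw : ‖w‖ ≤ (1 - ‖q‖) / 2) :
    ‖qExpC q w - 1‖ ≤ 2 / (1 - ‖q‖) * ‖w‖ := by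
  have hq0 : (0 : ℝ) < 1 - ‖q‖ := by linarith
  have hw1 : ‖w‖ < 1 := by nlinarith [norm_nonneg q, norm_nonneg w]
  have Sw := summable_exp hq hw1
  set s : ℝ := ‖w‖ / (1 - ‖q‖) with hs_def
  have hs0 : 0 ≤ s := div_nonneg (norm_nonneg w) hq0.le
  have hs : s ≤ 1 / 2 := by
    rw [hs_def, div_le_div_iff₀ hq0 two_pos]
    linarith
  have htail : qExpC q w - 1 = ∑' k : ℕ, w ^ (k + 1) / qPochC q q (k + 1) := by
    have := Summable.tsum_eq_zero_add Sw
    simp only [pow_zero, qPochC_zero, div_one] at this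
    rw [qExpC, this]
    ring
  rw [htail]
  have hb : ∀ k : ℕ, ‖w ^ (k + 1) / qPochC q q (k + 1)‖ ≤ s ^ (k + 1) := by
    intro k
    rw [norm_div, norm_pow, hs_def, div_pow]
    apply div_le_div_of_nonneg_left (by positivity) (by positivity)
    exact norm_poch_ge hq (k + 1)
  have hgs : Summable fun k : ℕ => s ^ (k + 1) := by
    apply Summable.comp_injective (f := fun k : ℕ => s ^ k) _ (add_left_injective 1)
    exact summable_geometric_of_lt_one hs0 (by linarith)
  have hns : Summable fun k : ℕ => ‖w ^ (k + 1) / qPochC q q (k + 1)‖ :=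
    Summable.of_nonneg_of_le (fun k => norm_nonneg _) hb hgs
  calc ‖∑' k : ℕ, w ^ (k + 1) / qPochC q q (k + 1)‖
      ≤ ∑' k : ℕ, ‖w ^ (k + 1) / qPochC q q (k + 1)‖ := norm_tsum_le_tsum_norm hns
    _ ≤ ∑' k : ℕ, s ^ (k + 1) := Summable.tsum_mono hns hgs hb
    _ = s * (1 - s)⁻¹ := by
        simp only [pow_succ']
        rw [tsum_mul_left, tsum_geometric_of_lt_one hs0 (by linarith)]
    _ ≤ 2 / (1 - ‖q‖) * ‖w‖ := by
        have h1 : (1 - s)⁻¹ ≤ 2 := by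
          rw [inv_le_comm₀ (by linarith) two_pos]
          linarith
        have : s * (1 - s)⁻¹ ≤ s * 2 := by nlinarith
        calc s * (1 - s)⁻¹ ≤ s * 2 := this
          _ = 2 / (1 - ‖q‖) * ‖w‖ := by rw [hs_def]; ring

lemma tendsto_exp_pow (hq : ‖q‖ < 1) :
    Tendsto (fun n : ℕ => qExpC q (q ^ (n + 1))) atTop (𝓝 1) := by
  have hq0 : (0 : ℝ) < 1 - ‖q‖ := by linarith
  have hpow : Tendsto (fun n : ℕ => ‖q‖ ^ (n + 1)) atTop (𝓝 0) := by
    have := tendsto_pow_atTop_nhds_zero_of_lt_one (norm_nonneg q) hq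
    exact this.comp (tendsto_add_atTop_nat 1)
  have hg : Tendsto (fun n : ℕ => 2 / (1 - ‖q‖) * ‖q‖ ^ (n + 1)) atTop (𝓝 0) := by
    simpa using hpow.const_mul (2 / (1 - ‖q‖))
  have hev : ∀ᶠ n : ℕ in atTop, ‖qExpC q (q ^ (n + 1)) - 1‖
      ≤ 2 / (1 - ‖q‖) * ‖q‖ ^ (n + 1) := by
    have hsmall : ∀ᶠ n : ℕ in atTop, ‖q‖ ^ (n + 1) ≤ (1 - ‖q‖) / 2 :=
      hpow.eventually_le_const (by linarith)
    filter_upwards [hsmall] with n hn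
    have := estimate hq (w := q ^ (n + 1)) (by rwa [norm_pow])
    rwa [norm_pow] at this
  have h0 : Tendsto (fun n : ℕ => qExpC q (q ^ (n + 1)) - 1) atTop (𝓝 0) :=
    squeeze_zero_norm' hev hg
  simpa using h0.add (tendsto_const_nhds (x := (1 : ℂ)))

/-- The key double-sum computation. -/
lemma transform (hq : ‖q‖ < 1) {c : ℂ} (hc : ‖c‖ < 1) :
    Summable (fun k : ℕ => q ^ k * qExpC q (c * q ^ k) / qPochC q q k) ∧
    ∑' k : ℕ, q ^ k * qExpC q (c * q ^ k) / qPochC q q k = qExpC q q * (1 - c)⁻¹ := by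
  set g : ℕ × ℕ → ℂ :=
    fun p => (q ^ p.1 / qPochC q q p.1) * ((c * q ^ p.1) ^ p.2 / qPochC q q p.2) with hg_def
  have hg : Summable g := by
    have h1 : Summable fun k : ℕ => ‖q ^ k / qPochC q q k‖ :=
      summable_norm_iff.mpr (summable_exp hq hq)
    have h2 : Summable fun n : ℕ => ‖c ^ n / qPochC q q n‖ :=
      summable_norm_iff.mpr (summable_exp hq hc)
    apply Summable.of_norm_bounded
      (h1.mul_of_nonneg h2 (fun k => norm_nonneg _) (fun n => norm_nonneg _))
    rintro ⟨k, n⟩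
    show ‖g (k, n)‖ ≤ ‖q ^ k / qPochC q q k‖ * ‖c ^ n / qPochC q q n‖
    have hgp : g (k, n) = (q ^ k / qPochC q q k) * ((c ^ n / qPochC q q n) * (q ^ k) ^ n) := by
      rw [hg_def]
      simp only [mul_pow]
      ring
    rw [hgp, norm_mul, norm_mul]
    have h3 : ‖(q ^ k : ℂ) ^ n‖ ≤ 1 := by
      rw [norm_pow, norm_pow]
      exact pow_le_one₀ (by positivity) (pow_le_one₀ (norm_nonneg q) hq.le)
    have h4 := norm_nonneg (c ^ n / qPochC q q n)
    have h5 := norm_nonneg (q ^ k / qPochC q q k)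
    have h7 : ‖q ^ k / qPochC q q k‖ * (‖c ^ n / qPochC q q n‖ * ‖((q:ℂ) ^ k) ^ n‖)
        ≤ ‖q ^ k / qPochC q q k‖ * (‖c ^ n / qPochC q q n‖ * 1) :=
      mul_le_mul_of_nonneg_left (mul_le_mul_of_nonneg_left h3 h4) h5
    simpa using h7
  have h1 : ∀ k : ℕ, ∑' n : ℕ, g (k, n) = q ^ k * qExpC q (c * q ^ k) / qPochC q q k := by
    intro k
    rw [hg_def]
    simp only
    rw [tsum_mul_left]
    rw [qExpC]
    ring
  have h2 : ∀ n : ℕ, ∑' k : ℕ, g (k, n) = c ^ n * qExpC q q := by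
    intro n
    have hrw : ∀ k : ℕ, g (k, n) = (c ^ n / qPochC q q n) * ((q ^ (n + 1)) ^ k / qPochC q q k) := by
      intro k
      rw [hg_def]
      simp only [mul_pow, ← pow_mul]
      have hPk : qPochC q q k ≠ 0 := poch_ne_zero hq k
      have hPn : qPochC q q n ≠ 0 := poch_ne_zero hq n
      field_simp
      ring
    simp only [hrw]
    rw [tsum_mul_left]
    have : (∑' k : ℕ, (q ^ (n + 1)) ^ k / qPochC q q k) = qExpC q (q ^ (n + 1)) := rfl
    rw [this, ← iterate hq n]
    have hp : qPochC q q n ≠ 0 := poch_ne_zero hq n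
    field_simp
  have hSk : Summable (fun k : ℕ => q ^ k * qExpC q (c * q ^ k) / qPochC q q k) := by
    have := hg.prod
    simpa only [h1] using this
  refine ⟨hSk, ?_⟩
  have hswap : ∑' (k : ℕ) (n : ℕ), g (k, n) = ∑' (n : ℕ) (k : ℕ), g (k, n) :=
    (Summable.tsum_comm (f := fun k n => g (k, n)) (by exact hg)).symm
  calc ∑' k : ℕ, q ^ k * qExpC q (c * q ^ k) / qPochC q q k
      = ∑' (k : ℕ) (n : ℕ), g (k, n) := by rw [tsum_congr h1]
    _ = ∑' (n : ℕ) (k : ℕ), g (k, n) := hswap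
    _ = ∑' n : ℕ, c ^ n * qExpC q q := tsum_congr h2
    _ = qExpC q q * (1 - c)⁻¹ := by
        rw [tsum_mul_right, tsum_geometric_of_norm_lt_one hc, mul_comm]

end QNatAux

open QNatAux Filter Topology

lemma tprod_mul_qExp {q : ℝ} (hq0 : 0 < q) (hq1 : q < 1) :
    (∏' k : ℕ, (1 - (q : ℂ) * (q : ℂ) ^ k)) * qExpC q q = 1 := by
  have hq : ‖(q : ℂ)‖ < 1 := by
    rw [Complex.norm_real, Real.norm_eq_abs, abs_of_pos hq0]
    exact hq1
  have hqk : ∀ k : ℕ, 0 < 1 - q * q ^ k := by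
    intro k
    have h1 : q * q ^ k < 1 := by
      have : q ^ k ≤ 1 := pow_le_one₀ hq0.le hq1.le
      nlinarith
    linarith
  have hmult : Multipliable (fun k : ℕ => (1 : ℂ) - (q : ℂ) * (q : ℂ) ^ k) := by
    apply Complex.multipliable_of_summable_log
    have hcast : ∀ k : ℕ, Complex.log ((1 : ℂ) - (q : ℂ) * (q : ℂ) ^ k)
        = ((Real.log (1 - q * q ^ k) : ℝ) : ℂ) := by
      intro k
      rw [Complex.ofReal_log (hqk k).le]
      push_cast
      ring_nf
    simp only [hcast]
    rw [Complex.summable_ofReal]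
    have hbound : ∀ k : ℕ, |Real.log (1 - q * q ^ k)| ≤ q ^ (k + 1) / (1 - q) := by
      intro k
      have h1 := hqk k
      have h2 : q * q ^ k ≤ q := by
        have : q ^ k ≤ 1 := pow_le_one₀ hq0.le hq1.le
        nlinarith
      have hlog_neg : Real.log (1 - q * q ^ k) ≤ 0 :=
        Real.log_nonpos (by linarith) (by nlinarith [pow_pos hq0 k])
      rw [abs_of_nonpos hlog_neg]
      have h3 : -Real.log (1 - q * q ^ k) = Real.log (1 - q * q ^ k)⁻¹ := by
        rw [Real.log_inv]
      rw [h3]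
      have h4 : Real.log (1 - q * q ^ k)⁻¹ ≤ (1 - q * q ^ k)⁻¹ - 1 :=
        Real.log_le_sub_one_of_pos (by positivity)
      have h5 : (1 - q * q ^ k)⁻¹ - 1 = (q * q ^ k) / (1 - q * q ^ k) := by
        field_simp
        ring
      have h6 : (q * q ^ k) / (1 - q * q ^ k) ≤ (q * q ^ k) / (1 - q) := by
        have h61 : (0:ℝ) ≤ q * q ^ k := by positivity
        have h62 : (0:ℝ) < 1 - q := by linarith
        have h63 : 1 - q ≤ 1 - q * q ^ k := by linarith
        exact div_le_div_of_nonneg_left h61 h62 h63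
      have h7 : (q * q ^ k) / (1 - q) = q ^ (k + 1) / (1 - q) := by
        rw [pow_succ]
        ring
      linarith
    apply Summable.of_abs
    apply Summable.of_nonneg_of_le (fun k => abs_nonneg _) hbound
    have : Summable fun k : ℕ => q ^ (k + 1) := by
      apply Summable.comp_injective (f := fun k : ℕ => q ^ k) _ (add_left_injective 1)
      exact summable_geometric_of_lt_one hq0.le hq1
    exact this.div_const _
  have hpartial : Tendsto (fun n : ℕ => ∏ i ∈ Finset.range n, ((1 : ℂ) - (q : ℂ) * (q : ℂ) ^ i))
      atTop (𝓝 (∏' k : ℕ, (1 - (q : ℂ) * (q : ℂ) ^ k))) :=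
    hmult.hasProd.tendsto_prod_nat
  have hpoch : ∀ n : ℕ, ∏ i ∈ Finset.range n, ((1 : ℂ) - (q : ℂ) * (q : ℂ) ^ i)
      = qPochC q q n := fun n => rfl
  simp only [hpoch] at hpartial
  have h2 : Tendsto (fun n : ℕ => qExpC q q * qPochC (q : ℂ) (q : ℂ) n) atTop (𝓝 1) := by
    have : (fun n : ℕ => qExpC q q * qPochC (q : ℂ) (q : ℂ) n)
        = fun n : ℕ => qExpC (q : ℂ) ((q : ℂ) ^ (n + 1)) := by
      funext n; exact iterate hq n
    rw [this]
    exact tendsto_exp_pow hq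
  have h3 : Tendsto (fun n : ℕ => qExpC q q * qPochC (q : ℂ) (q : ℂ) n) atTop
      (𝓝 (qExpC q q * (∏' k : ℕ, (1 - (q : ℂ) * (q : ℂ) ^ k)))) :=
    hpartial.const_mul _
  have := tendsto_nhds_unique h3 h2
  rw [mul_comm]
  exact this

/-- For `0 < q < 1`, `u, v > 0`, `a ∈ ℝ` with `|a u| < v`,
`N_q(sin_q(a x))(u;v) = a u/(v² + a² u²)`. -/
theorem qNatural_qSin (q a u v : ℝ) (hq0 : 0 < q) (hq1 : q < 1)
    (hu : 0 < u) (hv : 0 < v) (h : |a * u| < v) :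
    qNaturalC q (fun x => qSin q (a * x)) u v
      = (a * u : ℝ) / ((v ^ 2 + a ^ 2 * u ^ 2 : ℝ) : ℂ) := by
  have hq : ‖(q : ℂ)‖ < 1 := by
    rw [Complex.norm_real, Real.norm_eq_abs, abs_of_pos hq0]
    exact hq1
  have hv0 : (v : ℂ) ≠ 0 := Complex.ofReal_ne_zero.mpr hv.ne'
  set b : ℝ := a * u / v with hb_def
  have hb : |b| < 1 := by
    rw [hb_def, abs_div, abs_of_pos hv, div_lt_one hv]
    exact h
  set c₁ : ℂ := Complex.I * (b : ℂ) with hc1_def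
  set c₂ : ℂ := -(Complex.I * (b : ℂ)) with hc2_def
  have hc1 : ‖c₁‖ < 1 := by
    rw [hc1_def, norm_mul, Complex.norm_I, one_mul, Complex.norm_real, Real.norm_eq_abs]
    exact hb
  have hc2 : ‖c₂‖ < 1 := by rwa [hc2_def, norm_neg]
  obtain ⟨hS1, hT1⟩ := transform hq hc1
  obtain ⟨hS2, hT2⟩ := transform hq hc2
  have harg : ∀ k : ℕ,
      (q : ℂ) ^ k * qSin q ((a : ℂ) * ((u / v * q ^ k : ℝ) : ℂ)) / qPochC q q k
      = ((q : ℂ) ^ k * qExpC q (c₁ * (q : ℂ) ^ k) / qPochC q q k) / (2 * Complex.I)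
        - ((q : ℂ) ^ k * qExpC q (c₂ * (q : ℂ) ^ k) / qPochC q q k) / (2 * Complex.I) := by
    intro k
    have e1 : Complex.I * ((a : ℂ) * ((u / v * q ^ k : ℝ) : ℂ)) = c₁ * (q : ℂ) ^ k := by
      rw [hc1_def, hb_def]
      push_cast
      ring
    have e2 : -(c₁ * (q : ℂ) ^ k) = c₂ * (q : ℂ) ^ k := by
      rw [hc1_def, hc2_def]
      ring
    simp only [qSin]
    rw [e1, e2]
    ring
  have hmain : qNaturalC q (fun x => qSin q (a * x)) u v
      = (∏' k : ℕ, (1 - (q : ℂ) * (q : ℂ) ^ k)) / (v : ℂ)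
        * ((qExpC q q * (1 - c₁)⁻¹) / (2 * Complex.I)
          - (qExpC q q * (1 - c₂)⁻¹) / (2 * Complex.I)) := by
    rw [qNaturalC]
    congr 1
    refine (tsum_congr harg).trans ?_
    calc ∑' k : ℕ, (((q : ℂ) ^ k * qExpC q (c₁ * (q : ℂ) ^ k) / qPochC q q k) / (2 * Complex.I)
          - ((q : ℂ) ^ k * qExpC q (c₂ * (q : ℂ) ^ k) / qPochC q q k) / (2 * Complex.I))
        = (∑' k : ℕ, ((q : ℂ) ^ k * qExpC q (c₁ * (q : ℂ) ^ k) / qPochC q q k) / (2 * Complex.I))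
          - ∑' k : ℕ, ((q : ℂ) ^ k * qExpC q (c₂ * (q : ℂ) ^ k) / qPochC q q k) / (2 * Complex.I) :=
          Summable.tsum_sub (hS1.div_const _) (hS2.div_const _)
      _ = (qExpC q q * (1 - c₁)⁻¹) / (2 * Complex.I)
          - (qExpC q q * (1 - c₂)⁻¹) / (2 * Complex.I) := by
          rw [tsum_div_const, tsum_div_const, hT1, hT2]
  rw [hmain]
  have hPE := tprod_mul_qExp hq0 hq1
  set P : ℂ := ∏' k : ℕ, (1 - (q : ℂ) * (q : ℂ) ^ k) with hP_def
  set E : ℂ := qExpC q q with hE_def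
  have hc1ne : (1 : ℂ) - c₁ ≠ 0 := by
    intro hcontra
    have := congrArg Complex.re hcontra
    simp [hc1_def] at this
  have hc2ne : (1 : ℂ) - c₂ ≠ 0 := by
    intro hcontra
    have := congrArg Complex.re hcontra
    simp [hc2_def] at this
  have hI : (2 : ℂ) * Complex.I ≠ 0 := by simp [Complex.I_ne_zero]
  have hden : ((v ^ 2 + a ^ 2 * u ^ 2 : ℝ) : ℂ) ≠ 0 := by
    rw [Complex.ofReal_ne_zero]
    positivity
  -- rewrite everything in terms of P * E = 1
  have key : P / (v : ℂ) * ((E * (1 - c₁)⁻¹) / (2 * Complex.I)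
      - (E * (1 - c₂)⁻¹) / (2 * Complex.I))
      = (P * E) * ((1 - c₁)⁻¹ - (1 - c₂)⁻¹) / ((v : ℂ) * (2 * Complex.I)) := by
    field_simp
  rw [key, hPE, one_mul]
  have hbc : (b : ℂ) = (a : ℂ) * (u : ℂ) / (v : ℂ) := by
    rw [hb_def]; push_cast; ring
  rw [hc1_def, hc2_def, hbc]
  have hI2 : Complex.I ^ 2 = -1 := Complex.I_sq
  push_cast
  field_simp
  ring_nf
  have hz1 : (v : ℂ) - Complex.I * (a : ℂ) * (u : ℂ) ≠ 0 := by
    intro hcontra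
    have h1 := congrArg Complex.re hcontra
    simp at h1
    exact hv.ne' h1
  have hz2 : (v : ℂ) + Complex.I * (a : ℂ) * (u : ℂ) ≠ 0 := by
    intro hcontra
    have h1 := congrArg Complex.re hcontra
    simp at h1
    exact hv.ne' h1
  have hfact : ((v : ℂ) - Complex.I * (a : ℂ) * (u : ℂ))
      * ((v : ℂ) + Complex.I * (a : ℂ) * (u : ℂ))
      = (v : ℂ) ^ 2 + (a : ℂ) ^ 2 * (u : ℂ) ^ 2 := by
    linear_combination (-(a : ℂ) ^ 2 * (u : ℂ) ^ 2) * hI2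
  rw [← hfact]
  field_simp
  ring
end

section
/- Let 0 < q < 1 and a, v > 0 with |a| < v. The first-type q-Laplace transform L_q(f)(v) = N_q(f)(1;v) satisfies L_q(e_q(a x))(v) = 1/(v - a). -/
/-- The q-exponential `e_q(t) = ∑_{n≥0} t^n/(q;q)_n`. -/
noncomputable def qExp (q t : ℝ) : ℝ := ∑' n : ℕ, t ^ n / qPoch q q n

/-- The first-type q-Natural transform. -/
noncomputable def qNatural (q : ℝ) (f : ℝ → ℝ) (u v : ℝ) : ℝ :=
  qPochInf q q / v * ∑' k : ℕ, q ^ k * f (u / v * q ^ k) / qPoch q q k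

/-- The first-type q-Laplace transform `L_q(f)(v) = N_q(f)(1;v)`. -/
noncomputable def qLaplace (q : ℝ) (f : ℝ → ℝ) (v : ℝ) : ℝ := qNatural q f 1 v

open Filter Finset Topology
set_option linter.unusedSectionVars false
set_option maxHeartbeats 1000000

section aux

variable {q : ℝ} (hq0 : 0 < q) (hq1 : q < 1)
include hq0 hq1

private lemma fact_pos (k : ℕ) : 0 < 1 - q * q ^ k := by
  have h1 : q ^ k ≤ 1 := pow_le_one₀ hq0.le hq1.le
  nlinarith

private lemma qP_pos (n : ℕ) : 0 < qPoch q q n :=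
  Finset.prod_pos fun k _ => fact_pos hq0 hq1 k

omit hq0 hq1 in
private lemma qP_zero : qPoch q q 0 = 1 := by simp [qPoch]

omit hq0 hq1 in
private lemma qP_succ (n : ℕ) : qPoch q q (n + 1) = qPoch q q n * (1 - q ^ (n + 1)) := by
  rw [qPoch, Finset.prod_range_succ, ← qPoch, pow_succ']

private lemma summable_aux {t : ℝ} (ht : |t| < 1) :
    Summable fun n : ℕ => t ^ n / qPoch q q n := by
  have hr : (|t| + 1) / 2 < 1 := by linarith
  have hr0 : 0 < (|t| + 1) / 2 := by positivity
  apply summable_of_ratio_norm_eventually_le hr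
  have hlim : Tendsto (fun n : ℕ => q ^ (n + 1)) atTop (𝓝 0) :=
    (tendsto_pow_atTop_nhds_zero_of_lt_one hq0.le hq1).comp (tendsto_add_atTop_nat 1)
  have hev : ∀ᶠ n : ℕ in atTop, q ^ (n + 1) < (1 - |t|) / 2 := by
    have h2 : (0:ℝ) < (1 - |t|) / 2 := by linarith
    exact hlim.eventually_lt_const h2
  filter_upwards [hev] with n hn
  have hPn := qP_pos hq0 hq1 n
  have hPn1 := qP_pos hq0 hq1 (n + 1)
  rw [qP_succ] at hPn1 ⊢
  have hfac : 0 < 1 - q ^ (n + 1) := by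
    have := pow_lt_one₀ hq0.le hq1 (Nat.succ_ne_zero n)
    linarith
  rw [Real.norm_eq_abs, Real.norm_eq_abs, abs_div, abs_div, pow_succ, abs_mul,
    abs_of_pos (mul_pos hPn hfac), abs_of_pos hPn]
  rw [div_le_iff₀ (mul_pos hPn hfac)]
  have key : |t| ≤ (|t| + 1) / 2 * (1 - q ^ (n + 1)) := by nlinarith [abs_nonneg t]
  calc |t ^ n| * |t| ≤ |t ^ n| * ((|t| + 1) / 2 * (1 - q ^ (n + 1))) := by
        exact mul_le_mul_of_nonneg_left key (abs_nonneg _)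
    _ = (|t| + 1) / 2 * (|t ^ n| / qPoch q q n) * (qPoch q q n * (1 - q ^ (n + 1))) := by
        field_simp

private lemma fe {t : ℝ} (ht : |t| < 1) :
    (1 - t) * qExp q t = qExp q (q * t) := by
  have hqt : |q * t| < 1 := by
    rw [abs_mul, abs_of_pos hq0]
    calc q * |t| ≤ 1 * |t| := by nlinarith [abs_nonneg t]
      _ = |t| := one_mul _
      _ < 1 := ht
  have hS : Summable fun n : ℕ => t ^ n / qPoch q q n := summable_aux hq0 hq1 ht
  have hS' : Summable fun n : ℕ => (q * t) ^ n / qPoch q q n := summable_aux hq0 hq1 hqt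
  have hA : Summable fun n : ℕ => t ^ (n + 1) / qPoch q q (n + 1) :=
    hS.comp_injective Nat.succ_injective
  have hC : Summable fun n : ℕ => (q * t) ^ (n + 1) / qPoch q q (n + 1) :=
    hS'.comp_injective Nat.succ_injective
  have hB : Summable fun n : ℕ => t ^ (n + 1) / qPoch q q n := by
    apply (hS.mul_left t).congr
    intro n; rw [pow_succ']; ring
  have e1 : qExp q t = 1 + ∑' n : ℕ, t ^ (n + 1) / qPoch q q (n + 1) := by
    rw [qExp, Summable.tsum_eq_zero_add hS, qP_zero]; norm_num
  have e2 : qExp q (q * t) = 1 + ∑' n : ℕ, (q * t) ^ (n + 1) / qPoch q q (n + 1) := by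
    rw [qExp, Summable.tsum_eq_zero_add hS', qP_zero]; norm_num
  have e3 : t * qExp q t = ∑' n : ℕ, t ^ (n + 1) / qPoch q q n := by
    rw [qExp, ← tsum_mul_left]
    exact tsum_congr fun n => by rw [pow_succ']; ring
  have key : (∑' n : ℕ, t ^ (n + 1) / qPoch q q (n + 1)) - ∑' n : ℕ, t ^ (n + 1) / qPoch q q n
      = ∑' n : ℕ, (q * t) ^ (n + 1) / qPoch q q (n + 1) := by
    rw [← Summable.tsum_sub hA hB]
    apply tsum_congr
    intro n
    have hPn := (qP_pos hq0 hq1 n).ne'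
    have hPn1 : qPoch q q (n + 1) = qPoch q q n * (1 - q ^ (n + 1)) := qP_succ n
    have hfac : (1 : ℝ) - q ^ (n + 1) ≠ 0 := by
      have hlt : q ^ (n + 1) < 1 := pow_lt_one₀ hq0.le hq1 (Nat.succ_ne_zero n)
      intro hcon; linarith
    rw [hPn1, mul_pow]
    field_simp
    ring
  have : (1 - t) * qExp q t = qExp q t - t * qExp q t := by ring
  rw [this, e3, e1, e2, add_sub_assoc, key]

private lemma qExp_qpow (n : ℕ) : qExp q (q ^ (n + 1)) = qPoch q q n * qExp q q := by
  induction n with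
  | zero => rw [qP_zero, pow_one, one_mul]
  | succ m ih =>
    have habs : |q ^ (m + 1)| < 1 := by
      rw [abs_of_pos (pow_pos hq0 _)]
      exact pow_lt_one₀ hq0.le hq1 (Nat.succ_ne_zero m)
    have := fe hq0 hq1 habs
    rw [← pow_succ'] at this
    rw [this.symm, ih, qP_succ m]
    ring

private lemma tendsto_qExp_qpow :
    Tendsto (fun n : ℕ => qExp q (q ^ (n + 1))) atTop (𝓝 1) := by
  set c : ℝ := ∑' m : ℕ, q ^ (m + 1) / qPoch q q (m + 1) with hc
  have habsq : |q| < 1 := by rw [abs_of_pos hq0]; exact hq1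
  have hSq : Summable fun m : ℕ => q ^ m / qPoch q q m := summable_aux hq0 hq1 habsq
  have hSq1 : Summable fun m : ℕ => q ^ (m + 1) / qPoch q q (m + 1) :=
    hSq.comp_injective Nat.succ_injective
  have hterm_nonneg : ∀ N m : ℕ, 0 ≤ (q ^ (N + 1)) ^ (m + 1) / qPoch q q (m + 1) :=
    fun N m => div_nonneg (pow_nonneg (pow_nonneg hq0.le _) _) (qP_pos hq0 hq1 _).le
  have hlow : ∀ N : ℕ, 1 ≤ qExp q (q ^ (N + 1)) := by
    intro N
    have habs : |q ^ (N + 1)| < 1 := by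
      rw [abs_of_pos (pow_pos hq0 _)]
      exact pow_lt_one₀ hq0.le hq1 (Nat.succ_ne_zero N)
    have hS : Summable fun m : ℕ => (q ^ (N + 1)) ^ m / qPoch q q m := summable_aux hq0 hq1 habs
    have := Summable.tsum_eq_zero_add hS
    rw [qExp, this, qP_zero]
    have : 0 ≤ ∑' m : ℕ, (q ^ (N + 1)) ^ (m + 1) / qPoch q q (m + 1) :=
      tsum_nonneg (hterm_nonneg N)
    norm_num
    linarith
  have hupp : ∀ N : ℕ, qExp q (q ^ (N + 1)) ≤ 1 + q ^ N * c := by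
    intro N
    have habs : |q ^ (N + 1)| < 1 := by
      rw [abs_of_pos (pow_pos hq0 _)]
      exact pow_lt_one₀ hq0.le hq1 (Nat.succ_ne_zero N)
    have hS : Summable fun m : ℕ => (q ^ (N + 1)) ^ m / qPoch q q m := summable_aux hq0 hq1 habs
    rw [qExp, Summable.tsum_eq_zero_add hS, qP_zero]
    norm_num
    have hbound : ∀ m : ℕ, (q ^ (N + 1)) ^ (m + 1) / qPoch q q (m + 1)
        ≤ q ^ N * (q ^ (m + 1) / qPoch q q (m + 1)) := by
      intro m
      rw [← pow_mul]
      have hexp : (N + 1) * (m + 1) = (m + 1) + N * (m + 1) := by ring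
      rw [hexp, pow_add]
      have h1 : q ^ (N * (m + 1)) ≤ q ^ N :=
        pow_le_pow_of_le_one hq0.le hq1.le (Nat.le_mul_of_pos_right N (Nat.succ_pos m))
      have h2 : 0 < qPoch q q (m + 1) := qP_pos hq0 hq1 _
      rw [div_le_iff₀ h2, mul_comm (q ^ N) _, mul_assoc, div_mul_eq_mul_div, le_div_iff₀ h2]
      have h3 : 0 ≤ q ^ (m + 1) := pow_nonneg hq0.le _
      nlinarith [h2.le, mul_le_mul_of_nonneg_left h1 h3]
    calc ∑' m : ℕ, (q ^ (N + 1)) ^ (m + 1) / qPoch q q (m + 1)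
        ≤ ∑' m : ℕ, q ^ N * (q ^ (m + 1) / qPoch q q (m + 1)) :=
          (hS.comp_injective Nat.succ_injective).tsum_le_tsum hbound (hSq1.mul_left _)
      _ = q ^ N * c := tsum_mul_left
  have hupt : Tendsto (fun N : ℕ => 1 + q ^ N * c) atTop (𝓝 1) := by
    have := (tendsto_pow_atTop_nhds_zero_of_lt_one hq0.le hq1).mul_const c
    simpa using tendsto_const_nhds.add this
  exact tendsto_of_tendsto_of_tendsto_of_le_of_le tendsto_const_nhds hupt hlow hupp

private lemma multipliable_aux : Multipliable fun k : ℕ => 1 - q * q ^ k := by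
  have hlog : Summable fun k : ℕ => Real.log (1 - q * q ^ k) := by
    rw [← summable_neg_iff]
    apply Summable.of_nonneg_of_le (g := fun k => -Real.log (1 - q * q ^ k))
      (f := fun k => q * q ^ k / (1 - q))
    · intro k
      rw [neg_nonneg]
      apply Real.log_nonpos
      · exact (fact_pos hq0 hq1 k).le
      · nlinarith [pow_nonneg hq0.le k]
    · intro k
      have hx : 0 < 1 - q * q ^ k := fact_pos hq0 hq1 k
      have hlog_le : Real.log (1 - q * q ^ k)⁻¹ ≤ (1 - q * q ^ k)⁻¹ - 1 :=
        Real.log_le_sub_one_of_pos (by positivity)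
      rw [Real.log_inv] at hlog_le
      have heq : (1 - q * q ^ k)⁻¹ - 1 = q * q ^ k / (1 - q * q ^ k) := by
        field_simp
        ring
      rw [heq] at hlog_le
      refine hlog_le.trans ?_
      apply div_le_div_of_nonneg_left (by positivity) (by linarith) ?_
      have : q * q ^ k ≤ q * 1 := by
        nlinarith [pow_le_one₀ hq0.le hq1.le (n := k)]
      linarith
    · apply Summable.div_const
      exact (summable_geometric_of_lt_one hq0.le hq1).mul_left q
  exact Real.multipliable_of_summable_log (fun k => fact_pos hq0 hq1 k) hlog

private lemma qPochInf_mul_qExp : qPochInf q q * qExp q q = 1 := by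
  have hM := multipliable_aux hq0 hq1
  have h1 : Tendsto (fun N : ℕ => qPoch q q N) atTop (𝓝 (qPochInf q q)) :=
    hM.hasProd.tendsto_prod_nat
  have h2 : Tendsto (fun N : ℕ => qPoch q q N * qExp q q) atTop
      (𝓝 (qPochInf q q * qExp q q)) := h1.mul_const _
  have h3 : Tendsto (fun N : ℕ => qPoch q q N * qExp q q) atTop (𝓝 1) := by
    apply (tendsto_qExp_qpow hq0 hq1).congr
    intro N
    exact (qExp_qpow hq0 hq1 N)
  exact tendsto_nhds_unique h2 h3

end aux

/-- For `0 < q < 1`, `a, v > 0` with `|a| < v`, `L_q(e_q(a x))(v) = 1/(v - a)`. -/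
theorem qLaplace_qExp (q a v : ℝ) (hq0 : 0 < q) (hq1 : q < 1)
    (ha : 0 < a) (hv : 0 < v) (h : |a| < v) :
    qLaplace q (fun x => qExp q (a * x)) v = 1 / (v - a) := by
  have hav : a < v := by rwa [abs_of_pos ha] at h
  set r : ℝ := a / v with hrdef
  have hr0 : 0 < r := div_pos ha hv
  have hr1 : r < 1 := (div_lt_one hv).mpr hav
  have habsr : |r| < 1 := by rw [abs_of_pos hr0]; exact hr1
  have habsq : |q| < 1 := by rw [abs_of_pos hq0]; exact hq1
  have hSq : Summable fun k : ℕ => q ^ k / qPoch q q k := summable_aux hq0 hq1 habsq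
  have hSr : Summable fun n : ℕ => r ^ n / qPoch q q n := summable_aux hq0 hq1 habsr
  have hqk1 : ∀ k : ℕ, q ^ k ≤ 1 := fun k => pow_le_one₀ hq0.le hq1.le
  have hg_eq : ∀ k n : ℕ, (q ^ k / qPoch q q k) * ((r * q ^ k) ^ n / qPoch q q n)
      = (r ^ n / qPoch q q n) * ((q ^ (n + 1)) ^ k / qPoch q q k) := by
    intro k n
    have e1 : (r * q ^ k) ^ n = r ^ n * q ^ (k * n) := by rw [mul_pow, ← pow_mul]
    have e2 : (q ^ (n + 1)) ^ k = q ^ k * q ^ (k * n) := by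
      rw [← pow_mul, ← pow_add]
      ring_nf
    rw [e1, e2]
    ring
  have hG : Summable (Function.uncurry fun k n : ℕ =>
      (q ^ k / qPoch q q k) * ((r * q ^ k) ^ n / qPoch q q n)) := by
    apply Summable.of_nonneg_of_le
      (f := fun p : ℕ × ℕ => (q ^ p.1 / qPoch q q p.1) * (r ^ p.2 / qPoch q q p.2))
    · intro p
      have hP1 := qP_pos hq0 hq1 p.1
      have hP2 := qP_pos hq0 hq1 p.2
      have : (0:ℝ) < r * q ^ p.1 := by positivity
      simp only [Function.uncurry]
      positivity
    · intro p
      have hP1 := qP_pos hq0 hq1 p.1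
      have hP2 := qP_pos hq0 hq1 p.2
      simp only [Function.uncurry]
      have hle : (r * q ^ p.1) ^ p.2 ≤ r ^ p.2 := by
        apply pow_le_pow_left₀ (by positivity)
        nlinarith [hqk1 p.1]
      have h2 : (r * q ^ p.1) ^ p.2 / qPoch q q p.2 ≤ r ^ p.2 / qPoch q q p.2 := by
        gcongr
      exact mul_le_mul_of_nonneg_left h2 (by positivity)
    · exact hSq.mul_of_nonneg hSr
        (Pi.le_def.mpr fun k => div_nonneg (pow_nonneg hq0.le _) (qP_pos hq0 hq1 _).le)
        (Pi.le_def.mpr fun n => div_nonneg (pow_nonneg hr0.le _) (qP_pos hq0 hq1 _).le)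
  have hrow : ∀ k : ℕ, q ^ k * qExp q (r * q ^ k) / qPoch q q k
      = ∑' n : ℕ, (q ^ k / qPoch q q k) * ((r * q ^ k) ^ n / qPoch q q n) := by
    intro k
    rw [tsum_mul_left, qExp]
    ring
  have hcol : ∀ n : ℕ, (∑' k : ℕ, (q ^ k / qPoch q q k) * ((r * q ^ k) ^ n / qPoch q q n))
      = qExp q q * r ^ n := by
    intro n
    rw [tsum_congr (fun k => hg_eq k n), tsum_mul_left, ← qExp, qExp_qpow hq0 hq1 n]
    have hPn := (qP_pos hq0 hq1 n).ne'
    field_simp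
  have hswap : (∑' k : ℕ, ∑' n : ℕ, (q ^ k / qPoch q q k) * ((r * q ^ k) ^ n / qPoch q q n))
      = ∑' n : ℕ, ∑' k : ℕ, (q ^ k / qPoch q q k) * ((r * q ^ k) ^ n / qPoch q q n) :=
    (Summable.tsum_comm (f := fun k n : ℕ =>
      (q ^ k / qPoch q q k) * ((r * q ^ k) ^ n / qPoch q q n)) hG).symm
  have hsum : (∑' k : ℕ, q ^ k * qExp q (r * q ^ k) / qPoch q q k)
      = qExp q q * (1 - r)⁻¹ := by
    calc (∑' k : ℕ, q ^ k * qExp q (r * q ^ k) / qPoch q q k)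
        = ∑' k : ℕ, ∑' n : ℕ, (q ^ k / qPoch q q k) * ((r * q ^ k) ^ n / qPoch q q n) :=
          tsum_congr hrow
      _ = ∑' n : ℕ, ∑' k : ℕ, (q ^ k / qPoch q q k) * ((r * q ^ k) ^ n / qPoch q q n) := hswap
      _ = ∑' n : ℕ, qExp q q * r ^ n := tsum_congr hcol
      _ = qExp q q * ∑' n : ℕ, r ^ n := tsum_mul_left
      _ = qExp q q * (1 - r)⁻¹ := by rw [tsum_geometric_of_lt_one hr0.le hr1]
  rw [qLaplace, qNatural]
  have harg : (∑' k : ℕ, q ^ k * qExp q (a * (1 / v * q ^ k)) / qPoch q q k)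
      = ∑' k : ℕ, q ^ k * qExp q (r * q ^ k) / qPoch q q k := by
    apply tsum_congr
    intro k
    congr 2
    rw [hrdef]
    field_simp
  rw [harg, hsum]
  have hkey := qPochInf_mul_qExp hq0 hq1
  have hvne : v ≠ 0 := hv.ne'
  have h1r : (1:ℝ) - r ≠ 0 := by intro hcon; nlinarith
  have hva : v - a ≠ 0 := by intro hcon; nlinarith
  have hinv : (1 - r)⁻¹ = v / (v - a) := by
    rw [hrdef, one_sub_div hvne, inv_div]
  rw [hinv]
  have hstep : qPochInf q q / v * (qExp q q * (v / (v - a)))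
      = (qPochInf q q * qExp q q) * (1 / (v - a)) := by
    field_simp
  rw [hstep, hkey, one_mul]
end
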